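/- Let G₁ and G₂ be kernels on R^n_+, each having the reflection properties (P1)–(P3) for every λ > 0, and define the composed kernel G(x, y) = ∫_{R^n_+} G₁(x, z) G₂(z, y) dz, assumed finite for all x ≠ y in R^n_+. Then G has property (P1): for every λ > 0 and all x, y ∈ Σ_λ with x ≠ y, G(x^λ, y^λ) > max{G(x^λ, y), G(x, y^λ)}. -/

import Mathlib

open MeasureTheory Filter Set Metric
open scoped ENNReal

noncomputable section

variable {n : ℕ}

/-- Reflection of `x` about the hyperplane `x i = lam`. -/
def reflect (i : Fin n) (lam : ℝ) (x : EuclideanSpace ℝ (Fin n)) :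
    EuclideanSpace ℝ (Fin n) :=
  WithLp.toLp 2 (Function.update x.ofLp i (2 * lam - x i))

/-- The half space `R^n_+ = {x : x i > 0}` (with `i` the last coordinate). -/
def halfSpace (i : Fin n) : Set (EuclideanSpace ℝ (Fin n)) := {x | 0 < x i}

/-- `Σ_λ = {x ∈ R^n_+ : 0 < x i < λ}`. -/
def sigmaSlab (i : Fin n) (lam : ℝ) : Set (EuclideanSpace ℝ (Fin n)) :=
  {x | 0 < x i ∧ x i < lam}

/-- Property (P1) of a kernel. -/
def PropP1 (i : Fin n) (K : EuclideanSpace ℝ (Fin n) → EuclideanSpace ℝ (Fin n) → ℝ) : Prop :=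
  ∀ lam > (0 : ℝ), ∀ x ∈ sigmaSlab i lam, ∀ y ∈ sigmaSlab i lam, x ≠ y →
    max (K (reflect i lam x) y) (K x (reflect i lam y)) <
      K (reflect i lam x) (reflect i lam y)

/-- Property (P2) of a kernel. -/
def PropP2 (i : Fin n) (K : EuclideanSpace ℝ (Fin n) → EuclideanSpace ℝ (Fin n) → ℝ) : Prop :=
  ∀ lam > (0 : ℝ), ∀ x ∈ sigmaSlab i lam, ∀ y ∈ sigmaSlab i lam, x ≠ y →
    |K (reflect i lam x) y - K x (reflect i lam y)| <
      K (reflect i lam x) (reflect i lam y) - K x y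

/-- Property (P3) of a kernel. -/
def PropP3 (i : Fin n) (K : EuclideanSpace ℝ (Fin n) → EuclideanSpace ℝ (Fin n) → ℝ) : Prop :=
  ∀ lam > (0 : ℝ), ∀ x ∈ sigmaSlab i lam, ∀ y : EuclideanSpace ℝ (Fin n),
    0 < y i → lam ≤ y i → y ≠ reflect i lam x →
      K x y < K (reflect i lam x) y ∧ K y x < K y (reflect i lam x)

/-- A kernel has the reflection properties (P1)-(P3). -/
def HasReflProps (i : Fin n) (K : EuclideanSpace ℝ (Fin n) → EuclideanSpace ℝ (Fin n) → ℝ) :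
    Prop :=
  PropP1 i K ∧ PropP2 i K ∧ PropP3 i K

lemma reflect_apply_self (i : Fin n) (lam : ℝ) (x : EuclideanSpace ℝ (Fin n)) :
    reflect i lam x i = 2 * lam - x i := by
  simp [reflect]

lemma reflect_apply_ne (i : Fin n) (lam : ℝ) (x : EuclideanSpace ℝ (Fin n)) {j : Fin n}
    (h : j ≠ i) : reflect i lam x j = x j := by
  simp [reflect, Function.update_of_ne h]

lemma reflect_involutive (i : Fin n) (lam : ℝ) :
    Function.Involutive (reflect i lam) := by
  intro x
  ext j
  rcases eq_or_ne j i with rfl | h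
  · rw [reflect_apply_self, reflect_apply_self]; ring
  · rw [reflect_apply_ne _ _ _ h, reflect_apply_ne _ _ _ h]

lemma reflect_injective (i : Fin n) (lam : ℝ) :
    Function.Injective (reflect i lam) :=
  (reflect_involutive i lam).injective

/-- reflect as sum of linear isometry and translation -/
def negCoord (i : Fin n) : EuclideanSpace ℝ (Fin n) ≃ₗᵢ[ℝ] EuclideanSpace ℝ (Fin n) :=
  LinearIsometryEquiv.piLpCongrRight 2
    (fun j => if j = i then LinearIsometryEquiv.neg ℝ else LinearIsometryEquiv.refl ℝ ℝ)

lemma reflect_eq (i : Fin n) (lam : ℝ) :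
    reflect i lam = fun x => EuclideanSpace.single i (2*lam : ℝ) + negCoord i x := by
  funext x
  ext j
  rcases eq_or_ne j i with rfl | h
  · simp [reflect_apply_self, negCoord, EuclideanSpace.single_apply]
    ring
  · simp [reflect_apply_ne _ _ _ h, negCoord, EuclideanSpace.single_apply, h]

lemma measurePreserving_reflect (i : Fin n) (lam : ℝ) :
    MeasurePreserving (reflect i lam) (volume : Measure (EuclideanSpace ℝ (Fin n))) volume := by
  rw [reflect_eq]
  exact (measurePreserving_add_left volume _).comp (negCoord i).measurePreserving

def reflectEquiv (i : Fin n) (lam : ℝ) :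
    EuclideanSpace ℝ (Fin n) ≃ᵐ EuclideanSpace ℝ (Fin n) where
  toFun := reflect i lam
  invFun := reflect i lam
  left_inv := reflect_involutive i lam
  right_inv := reflect_involutive i lam
  measurable_toFun := (measurePreserving_reflect i lam).measurable
  measurable_invFun := (measurePreserving_reflect i lam).measurable

lemma reflectEmbedding (i : Fin n) (lam : ℝ) :
    MeasurableEmbedding (reflect i lam) :=
  (reflectEquiv i lam).measurableEmbedding

lemma continuous_eval (i : Fin n) :
    Continuous (fun x : EuclideanSpace ℝ (Fin n) => x i) :=
  (EuclideanSpace.proj i).continuous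

lemma measurable_eval (i : Fin n) :
    Measurable (fun x : EuclideanSpace ℝ (Fin n) => x i) :=
  (continuous_eval i).measurable

lemma volume_hyperplane (i : Fin n) (c : ℝ) :
    volume {x : EuclideanSpace ℝ (Fin n) | x i = c} = 0 := by
  have h := EuclideanSpace.volume_preserving_symm_measurableEquiv_toLp (Fin n)
  have hs : {x : EuclideanSpace ℝ (Fin n) | x i = c}
      = (MeasurableEquiv.toLp 2 (Fin n → ℝ)).symm ⁻¹' {f : Fin n → ℝ | f i = c} := rfl
  rw [hs, h.measure_preimage_emb (MeasurableEquiv.toLp 2 (Fin n → ℝ)).symm.measurableEmbedding]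
  rw [volume_pi]
  exact MeasureTheory.Measure.pi_hyperplane (fun _ : Fin n => (volume : Measure ℝ)) i c


lemma transpose_reflProps {i : Fin n} {K : EuclideanSpace ℝ (Fin n) → EuclideanSpace ℝ (Fin n) → ℝ}
    (h : HasReflProps i K) : HasReflProps i (fun x y => K y x) := by
  obtain ⟨h1, h2, h3⟩ := h
  refine ⟨?_, ?_, ?_⟩
  · intro lam hlam x hx y hy hxy
    have := h1 lam hlam y hy x hx (Ne.symm hxy)
    simpa [max_comm] using this
  · intro lam hlam x hx y hy hxy
    have := h2 lam hlam y hy x hx (Ne.symm hxy)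
    simpa [abs_sub_comm] using this
  · intro lam hlam x hx y hy1 hy2 hy3
    exact ⟨(h3 lam hlam x hx y hy1 hy2 hy3).2, (h3 lam hlam x hx y hy1 hy2 hy3).1⟩

lemma key_pos (i : Fin n)
    (G₁ G₂ : EuclideanSpace ℝ (Fin n) → EuclideanSpace ℝ (Fin n) → ℝ)
    (h₁pos : ∀ x ∈ halfSpace i, ∀ y ∈ halfSpace i, 0 < G₁ x y)
    (h₂pos : ∀ x ∈ halfSpace i, ∀ y ∈ halfSpace i, 0 < G₂ x y)
    (h₁ : HasReflProps i G₁) (h₂ : HasReflProps i G₂)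
    (hint : ∀ x ∈ halfSpace i, ∀ y ∈ halfSpace i, x ≠ y →
      IntegrableOn (fun z => G₁ x z * G₂ z y) (halfSpace i))
    (lam : ℝ) (hlam : 0 < lam) (x y : EuclideanSpace ℝ (Fin n))
    (hx : x ∈ sigmaSlab i lam) (hy : y ∈ sigmaSlab i lam) (hxy : x ≠ y) :
    0 < ∫ z in halfSpace i, G₁ (reflect i lam x) z * (G₂ z (reflect i lam y) - G₂ z y) := by
  obtain ⟨hx1, hx2⟩ := hx
  obtain ⟨hy1, hy2⟩ := hy
  set xr := reflect i lam x with hxr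
  set yr := reflect i lam y with hyr
  have hxri : xr i = 2 * lam - x i := reflect_apply_self i lam x
  have hyri : yr i = 2 * lam - y i := reflect_apply_self i lam y
  have hxrS : xr ∈ halfSpace i := by simp only [halfSpace, mem_setOf_eq, hxri]; linarith
  have hyrS : yr ∈ halfSpace i := by simp only [halfSpace, mem_setOf_eq, hyri]; linarith
  have hyS : y ∈ halfSpace i := hy1
  have hxS : x ∈ halfSpace i := hx1
  have hxr_ne_y : xr ≠ y := by
    intro h; rw [h] at hxri; linarith
  have hxr_ne_yr : xr ≠ yr := fun h => hxy (reflect_injective i lam h)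
  set f : EuclideanSpace ℝ (Fin n) → ℝ := fun z => G₁ xr z * (G₂ z yr - G₂ z y) with hf
  set S := halfSpace i with hS
  -- integrability of f on S
  have hfint : IntegrableOn f S := by
    have h1 := hint xr hxrS yr hyrS hxr_ne_yr
    have h2 := hint xr hxrS y hyS hxr_ne_y
    have : f = fun z => G₁ xr z * G₂ z yr - G₁ xr z * G₂ z y := by
      funext z; simp [hf]; ring
    rw [this]
    exact h1.sub h2
  -- the three pieces
  set A : Set (EuclideanSpace ℝ (Fin n)) := {z | 0 < z i ∧ z i < lam} with hA
  set B : Set (EuclideanSpace ℝ (Fin n)) := {z | lam < z i ∧ z i < 2 * lam} with hB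
  set C : Set (EuclideanSpace ℝ (Fin n)) := {z | 2 * lam ≤ z i} with hC
  have hmeasA : MeasurableSet A :=
    (measurable_eval i measurableSet_Ioo : MeasurableSet ((fun z : EuclideanSpace ℝ (Fin n) => z i) ⁻¹' (Set.Ioo 0 lam)))
  have hmeasB : MeasurableSet B :=
    (measurable_eval i measurableSet_Ioo : MeasurableSet ((fun z : EuclideanSpace ℝ (Fin n) => z i) ⁻¹' (Set.Ioo lam (2*lam))))
  have hmeasC : MeasurableSet C :=
    (measurable_eval i measurableSet_Ici : MeasurableSet ((fun z : EuclideanSpace ℝ (Fin n) => z i) ⁻¹' (Set.Ici (2*lam))))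
  have hAS : A ⊆ S := fun z hz => hz.1
  have hBS : B ⊆ S := fun z hz => lt_trans hlam hz.1
  have hCS : C ⊆ S := by
    intro z hz
    have h2 : 2 * lam ≤ z i := hz
    show 0 < z i
    linarith
  -- S =ᵐ A ∪ B ∪ C
  have hScong : ∫ z in S, f z = ∫ z in A ∪ B ∪ C, f z := by
    apply setIntegral_congr_set
    rw [Filter.eventuallyEq_set]
    have hnull : volume ({z : EuclideanSpace ℝ (Fin n) | z i = lam} ∪ {z | z i = 2*lam}) = 0 :=
      measure_union_null (volume_hyperplane i lam) (volume_hyperplane i (2*lam))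
    refine ((measure_eq_zero_iff_ae_notMem.mp hnull).mono ?_)
    intro z hz
    simp only [mem_union, mem_setOf_eq, not_or] at hz
    obtain ⟨hz1, hz2⟩ := hz
    constructor
    · intro hzS
      by_cases h1 : z i < lam
      · exact Or.inl (Or.inl ⟨hzS, h1⟩)
      · by_cases h2 : z i < 2*lam
        · exact Or.inl (Or.inr ⟨lt_of_le_of_ne (not_lt.mp h1) (Ne.symm hz1), h2⟩)
        · exact Or.inr (not_lt.mp h2)
    · intro hzU
      rcases hzU with (h | h) | h
      · exact hAS h
      · exact hBS h
      · exact hCS h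

  -- disjointness
  have hdAB : Disjoint A B := by
    rw [Set.disjoint_left]
    intro z hzA hzB
    exact absurd hzB.1 (not_lt.mpr (le_of_lt hzA.2))
  have hdABC : Disjoint (A ∪ B) C := by
    rw [Set.disjoint_left]
    intro z hzAB hzC
    have h2 : 2 * lam ≤ z i := hzC
    rcases hzAB with h | h
    · have := h.2; linarith
    · have := h.2; linarith
  have hfA : IntegrableOn f A := hfint.mono_set hAS
  have hfB : IntegrableOn f B := hfint.mono_set hBS
  have hfC : IntegrableOn f C := hfint.mono_set hCS
  have hsplit : ∫ z in A ∪ B ∪ C, f z = ((∫ z in A, f z) + ∫ z in B, f z) + ∫ z in C, f z := by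
    rw [setIntegral_union hdABC hmeasC (hfA.union hfB) hfC,
      setIntegral_union hdAB hmeasB hfA hfB]
  -- the C part is nonnegative
  have hCnn : 0 ≤ ∫ z in C, f z := by
    apply setIntegral_nonneg hmeasC
    intro z hz
    have h2 : 2 * lam ≤ z i := hz
    have hzS : z ∈ S := hCS hz
    have hzne : z ≠ yr := by
      intro h; rw [h] at h2; rw [hyri] at h2; linarith
    have hp3 := (h₂.2.2 lam hlam y ⟨hy1, hy2⟩ z (hzS) (by linarith) hzne).2
    have := h₁pos xr hxrS z hzS
    simp only [hf]
    have hnn : 0 ≤ G₂ z yr - G₂ z y := by rw [← hyr] at hp3; linarith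
    exact mul_nonneg (le_of_lt this) hnn
  -- reflect B to A
  have hBA : ∫ z in B, f z = ∫ z in A, f (reflect i lam z) := by
    have hpre : reflect i lam ⁻¹' B = A := by
      ext z
      simp only [mem_preimage, hB, hA, mem_setOf_eq, reflect_apply_self]
      constructor
      · rintro ⟨u, v⟩; constructor <;> linarith
      · rintro ⟨u, v⟩; constructor <;> linarith
    rw [← (measurePreserving_reflect i lam).setIntegral_preimage_emb
      (reflectEmbedding i lam) f B, hpre]
  have hfBA : IntegrableOn (fun z => f (reflect i lam z)) A := by
    have hpre : reflect i lam ⁻¹' B = A := by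
      ext z
      simp only [mem_preimage, hB, hA, mem_setOf_eq, reflect_apply_self]
      constructor
      · rintro ⟨u, v⟩; constructor <;> linarith
      · rintro ⟨u, v⟩; constructor <;> linarith
    have := ((measurePreserving_reflect i lam).restrict_preimage_emb
      (reflectEmbedding i lam) B).integrable_comp_emb (reflectEmbedding i lam) (g := f)
    rw [hpre] at this
    exact this.mpr hfB
  -- positivity on A
  set g : EuclideanSpace ℝ (Fin n) → ℝ := fun z => f z + f (reflect i lam z) with hg
  have hAB_eq : (∫ z in A, f z) + ∫ z in B, f z = ∫ z in A, g z := by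
    rw [hBA, ← integral_add hfA hfBA]
  -- pointwise positivity off hyperplanes through x and y
  have hptwise : ∀ z ∈ A, z i ≠ x i → z i ≠ y i → 0 < g z := by
    intro z hzA hzx hzy
    have hz1 : 0 < z i := hzA.1
    have hz2 : z i < lam := hzA.2
    have hzS : z ∈ S := hAS hzA
    set zr := reflect i lam z with hzr
    have hzri : zr i = 2 * lam - z i := reflect_apply_self i lam z
    have hzrS : zr ∈ S := by show 0 < zr i; rw [hzri]; linarith
    have hznex : z ≠ x := fun h => hzx (by rw [h])
    have hzney : z ≠ y := fun h => hzy (by rw [h])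
    have ha : 0 < G₁ xr z := h₁pos xr hxrS z hzS
    have hb : G₁ xr z < G₁ xr zr := by
      have h3 := (h₁.2.2 lam hlam z ⟨hz1, hz2⟩ xr hxrS (by rw [hxri]; linarith)
        (fun h => hznex (reflect_injective i lam (hxr.symm.trans h)).symm)).2
      rw [← hzr] at h3
      exact h3
    have hd : G₂ zr y < G₂ zr yr := by
      have h3 := (h₂.2.2 lam hlam y ⟨hy1, hy2⟩ zr hzrS (by rw [hzri]; linarith)
        (fun h => hzney (reflect_injective i lam (hzr.symm.trans h)))).2
      rw [← hyr] at h3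
      exact h3
    have hcd : 0 < (G₂ z yr - G₂ z y) + (G₂ zr yr - G₂ zr y) := by
      have h2' := h₂.2.1 lam hlam z ⟨hz1, hz2⟩ y ⟨hy1, hy2⟩ hzney
      rw [← hzr, ← hyr] at h2'
      have := abs_lt.mp h2'
      obtain ⟨l, r⟩ := this
      linarith
    have hfz : g z = G₁ xr z * (G₂ z yr - G₂ z y) + G₁ xr zr * (G₂ zr yr - G₂ zr y) := rfl
    rw [hfz]
    set a := G₁ xr z
    set b := G₁ xr zr
    set c := G₂ z yr - G₂ z y
    set d := G₂ zr yr - G₂ zr y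
    have key : a * c + b * d = a * (c + d) + (b - a) * d := by ring
    rw [key]
    have h1 : 0 < a * (c + d) := mul_pos ha hcd
    have h2 : 0 < (b - a) * d := mul_pos (sub_pos.mpr hb) (sub_pos.mpr hd)
    linarith
  -- a.e. positivity and integral positivity
  have hgint : IntegrableOn g A := hfA.add hfBA
  have hN : volume ({z : EuclideanSpace ℝ (Fin n) | z i = x i} ∪ {z | z i = y i}) = 0 :=
    measure_union_null (volume_hyperplane i (x i)) (volume_hyperplane i (y i))
  have hApos : 0 < ∫ z in A, g z := by
    have hnonneg : 0 ≤ᵐ[volume.restrict A] g := by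
      rw [EventuallyLE, ae_restrict_iff' hmeasA]
      refine (measure_eq_zero_iff_ae_notMem.mp hN).mono ?_
      intro z hz hzA
      simp only [mem_union, mem_setOf_eq, not_or] at hz
      exact le_of_lt (hptwise z hzA hz.1 hz.2)
    rw [setIntegral_pos_iff_support_of_nonneg_ae hnonneg hgint]
    have hsub : A \ ({z : EuclideanSpace ℝ (Fin n) | z i = x i} ∪ {z | z i = y i})
        ⊆ Function.support g ∩ A := by
      intro z hz
      obtain ⟨hzA, hzN⟩ := hz
      simp only [mem_union, mem_setOf_eq, not_or] at hzN
      exact ⟨ne_of_gt (hptwise z hzA hzN.1 hzN.2), hzA⟩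
    have hAmeas_pos : 0 < volume A := by
      have hopen : IsOpen A := by
        have : A = (fun z : EuclideanSpace ℝ (Fin n) => z i) ⁻¹' (Set.Ioo 0 lam) := rfl
        rw [this]
        exact isOpen_Ioo.preimage (continuous_eval i)
      apply hopen.measure_pos volume
      refine ⟨EuclideanSpace.single i (lam / 2), ?_⟩
      constructor <;> simp [EuclideanSpace.single_apply] <;> linarith
    calc (0 : ℝ≥0∞) < volume (A \ ({z : EuclideanSpace ℝ (Fin n) | z i = x i} ∪ {z | z i = y i})) := by
          rw [measure_diff_null hN]; exact hAmeas_pos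
      _ ≤ volume (Function.support g ∩ A) := measure_mono hsub
  rw [hScong, hsplit, hAB_eq]
  linarith

/-- the composed kernel `G(x,y) = ∫_{R^n_+} G₁(x,z) G₂(z,y) dz`
inherits property (P1). -/
theorem composed_kernel_P1
    (n : ℕ) (i : Fin n) (hi : (i : ℕ) = n - 1) (hn : 2 ≤ n)
    (G₁ G₂ : EuclideanSpace ℝ (Fin n) → EuclideanSpace ℝ (Fin n) → ℝ)
    (h₁pos : ∀ x ∈ halfSpace i, ∀ y ∈ halfSpace i, 0 < G₁ x y)
    (h₂pos : ∀ x ∈ halfSpace i, ∀ y ∈ halfSpace i, 0 < G₂ x y)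
    (h₁ : HasReflProps i G₁) (h₂ : HasReflProps i G₂)
    (hint : ∀ x ∈ halfSpace i, ∀ y ∈ halfSpace i, x ≠ y →
      IntegrableOn (fun z => G₁ x z * G₂ z y) (halfSpace i)) :
    PropP1 i (fun x y => ∫ z in halfSpace i, G₁ x z * G₂ z y) := by
  intro lam hlam x hx y hy hxy
  obtain ⟨hx1, hx2⟩ := hx
  obtain ⟨hy1, hy2⟩ := hy
  set S := halfSpace i with hS
  set xr := reflect i lam x with hxr
  set yr := reflect i lam y with hyr
  have hxri : xr i = 2 * lam - x i := reflect_apply_self i lam x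
  have hyri : yr i = 2 * lam - y i := reflect_apply_self i lam y
  have hxrS : xr ∈ S := by show 0 < xr i; rw [hxri]; linarith
  have hyrS : yr ∈ S := by show 0 < yr i; rw [hyri]; linarith
  have hxS : x ∈ S := hx1
  have hyS : y ∈ S := hy1
  have hxr_ne_y : xr ≠ y := by intro h; rw [h] at hxri; linarith
  have hx_ne_yr : x ≠ yr := by intro h; rw [← h] at hyri; linarith
  have hxr_ne_yr : xr ≠ yr := fun h => hxy (reflect_injective i lam h)
  apply max_lt
  · -- G xr y < G xr yr
    have hpos := key_pos i G₁ G₂ h₁pos h₂pos h₁ h₂ hint lam hlam x y ⟨hx1, hx2⟩ ⟨hy1, hy2⟩ hxy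
    rw [← hxr, ← hyr, ← hS] at hpos
    have heq : (fun z => G₁ xr z * (G₂ z yr - G₂ z y))
        = fun z => G₁ xr z * G₂ z yr - G₁ xr z * G₂ z y := by
      funext z; ring
    rw [heq] at hpos
    rw [integral_sub (hint xr hxrS yr hyrS hxr_ne_yr) (hint xr hxrS y hyS hxr_ne_y)] at hpos
    linarith
  · -- G x yr < G xr yr
    have hpos := key_pos i (fun a b => G₂ b a) (fun a b => G₁ b a)
      (fun a ha b hb => h₂pos b hb a ha) (fun a ha b hb => h₁pos b hb a ha)
      (transpose_reflProps h₂) (transpose_reflProps h₁)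
      (fun a ha b hb hab => by
        have := hint b hb a ha (Ne.symm hab)
        exact this.congr_fun (fun z _ => mul_comm (G₁ b z) (G₂ z a)) (measurable_eval i measurableSet_Ioi))
      lam hlam y x ⟨hy1, hy2⟩ ⟨hx1, hx2⟩ (Ne.symm hxy)
    rw [← hxr, ← hyr, ← hS] at hpos
    have heq : (fun z => G₂ z yr * (G₁ xr z - G₁ x z))
        = fun z => G₁ xr z * G₂ z yr - G₁ x z * G₂ z yr := by
      funext z; ring
    rw [heq] at hpos
    rw [integral_sub (hint xr hxrS yr hyrS hxr_ne_yr) (hint x hxS yr hyrS hx_ne_yr)] at hpos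
    linarith
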